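/- arXiv:2209.13662 — 2 statements merged into one kernel-verified Lean document; each statement's English description precedes it below -/
import Mathlib

section
/- Let k be a field of characteristic zero, K a field which is a commutative k-algebra, and D : Derivation k K K a nonzero derivation. Then K satisfies no nontrivial differential identity: for every n ≥ 1 and every nonzero f ∈ MvPolynomial (Fin n × ℕ) k there exists v : Fin n → K such that the evaluation of f at v (sending X (i, j) to D^[j] (v i)) is nonzero. -/
open MvPolynomial Finset

section Aux

variable {k K : Type} [Field k] [Field K] [Algebra k K]

noncomputable def bellA (D : Derivation k K K) (t : K) : ℕ → ℕ → K
  | 0, 0 => 1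
  | 0, _ + 1 => 0
  | s + 1, 0 => D (bellA D t s 0)
  | s + 1, m + 1 => D (bellA D t s (m + 1)) + D t * bellA D t s m

lemma bellA_eq_zero (D : Derivation k K K) (t : K) :
    ∀ s m : ℕ, s < m → bellA D t s m = 0 := by
  intro s
  induction s with
  | zero => intro m hm; match m, hm with
    | m + 1, _ => rfl
  | succ s ih =>
    intro m hm
    match m, hm with
    | m + 1, hm =>
      have h1 : s < m + 1 := by omega
      have h2 : s < m := by omega
      simp [bellA, ih _ h1, ih _ h2]

lemma bellA_diag (D : Derivation k K K) (t : K) (s : ℕ) :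
    bellA D t s s = (D t) ^ s := by
  induction s with
  | zero => simp [bellA]
  | succ s ih =>
    show D (bellA D t s (s + 1)) + D t * bellA D t s s = _
    rw [bellA_eq_zero D t s (s + 1) (by omega), ih]
    simp [pow_succ, mul_comm]

lemma iterD_pow (D : Derivation k K K) (t : K) (r : ℕ) :
    ∀ s : ℕ, (⇑D)^[s] (t ^ r) =
      ∑ m ∈ range (s + 1), (r.descFactorial m : K) * (bellA D t s m * t ^ (r - m)) := by
  intro s
  induction s with
  | zero => simp [bellA]
  | succ s ih =>
    rw [Function.iterate_succ_apply', ih, map_sum]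
    set X : ℕ → K := fun m => (r.descFactorial m : K) * (D (bellA D t s m) * t ^ (r - m))
      with hX
    set Y : ℕ → K := fun m =>
      (r.descFactorial (m + 1) : K) * (D t * bellA D t s m * t ^ (r - (m + 1))) with hY
    have hterm : ∀ m ∈ range (s + 1),
        D ((r.descFactorial m : K) * (bellA D t s m * t ^ (r - m))) = X m + Y m := by
      intro m _
      have hc : D ((r.descFactorial m : K)) = 0 := D.map_natCast (r.descFactorial m)
      have hpow : D (t ^ (r - m)) = ((r - m : ℕ) : K) * (t ^ (r - m - 1) * D t) := by
        rw [D.leibniz_pow]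
        simp [smul_eq_mul, nsmul_eq_mul]
      rw [Derivation.leibniz, Derivation.leibniz, hc, hpow]
      have hdf : (r.descFactorial (m + 1) : K)
          = (r.descFactorial m : K) * ((r - m : ℕ) : K) := by
        rw [Nat.descFactorial_succ]; push_cast; ring
      have hsub : r - m - 1 = r - (m + 1) := by omega
      rw [hX, hY]
      simp only [smul_eq_mul, hdf, hsub]
      ring
    rw [sum_congr rfl hterm, sum_add_distrib]
    -- RHS
    have hrhs : ∑ m ∈ range (s + 1 + 1),
        (r.descFactorial m : K) * (bellA D t (s + 1) m * t ^ (r - m))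
        = (∑ m ∈ range (s + 1), (X (m + 1) + Y m)) + X 0 := by
      rw [Finset.sum_range_succ']
      congr 1
      · refine sum_congr rfl fun m _ => ?_
        show (r.descFactorial (m + 1) : K) *
          ((D (bellA D t s (m + 1)) + D t * bellA D t s m) * t ^ (r - (m + 1))) = _
        rw [hX, hY]; ring
    rw [hrhs, sum_add_distrib]
    have hXs : ∑ m ∈ range (s + 1), X m = (∑ m ∈ range (s + 1), X (m + 1)) + X 0 := by
      rw [Finset.sum_range_succ' X s]
      rw [Finset.sum_range_succ (fun m => X (m + 1)) s]
      have : X (s + 1) = 0 := by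
        rw [hX]; simp [bellA_eq_zero D t s (s + 1) (by omega)]
      rw [this, add_zero]
    rw [hXs]
    ring

lemma wronsk_isUnit [CharZero K] (D : Derivation k K K) (t : K) (ht : D t ≠ 0) (N : ℕ) :
    IsUnit (Matrix.det (Matrix.of fun j r : Fin N => (⇑D)^[(j : ℕ)] (t ^ (r : ℕ)))) := by
  set MA : Matrix (Fin N) (Fin N) K := Matrix.of fun j m => bellA D t (j : ℕ) (m : ℕ) with hMA
  set MV : Matrix (Fin N) (Fin N) K :=
    Matrix.of fun m r => ((r : ℕ).descFactorial (m : ℕ) : K) * t ^ ((r : ℕ) - (m : ℕ)) with hMV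
  have hfact : (Matrix.of fun j r : Fin N => (⇑D)^[(j : ℕ)] (t ^ (r : ℕ))) = MA * MV := by
    ext j r
    simp only [Matrix.of_apply, Matrix.mul_apply, hMA, hMV, Matrix.of_apply]
    rw [iterD_pow D t (r : ℕ) (j : ℕ)]
    rw [Fin.sum_univ_eq_sum_range
      (fun m => bellA D t (j : ℕ) m * (((r : ℕ).descFactorial m : K) * t ^ ((r : ℕ) - m))) N]
    rw [Finset.sum_subset (Finset.range_subset_range.mpr (by omega : (j : ℕ) + 1 ≤ N))]
    · exact sum_congr rfl fun m _ => by ring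
    · intro m _ hm
      have : (j : ℕ) < m := by simp at hm; omega
      simp [bellA_eq_zero D t _ _ this]
  rw [hfact, Matrix.det_mul]
  apply IsUnit.mul
  · have : MA.det = ∏ j : Fin N, (D t) ^ (j : ℕ) := by
      rw [Matrix.det_of_lowerTriangular MA (fun i j hij => ?_)]
      · exact Finset.prod_congr rfl fun j _ => bellA_diag D t (j : ℕ)
      · exact bellA_eq_zero D t _ _ (by exact_mod_cast hij)
    rw [this]
    exact (Finset.prod_ne_zero_iff.mpr fun j _ => pow_ne_zero _ ht).isUnit
  · have : MV.det = ∏ r : Fin N, (((r : ℕ).factorial : K)) := by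
      rw [Matrix.det_of_upperTriangular (M := MV) (fun i j hij => ?_)]
      · refine Finset.prod_congr rfl fun r _ => ?_
        simp [hMV, Nat.descFactorial_self]
      · have : ((j : ℕ)).descFactorial (i : ℕ) = 0 :=
          Nat.descFactorial_eq_zero_iff_lt.mpr (by exact_mod_cast hij)
        simp [hMV, this]
    rw [this]
    exact (Finset.prod_ne_zero_iff.mpr fun r _ =>
      (Nat.cast_ne_zero (R := K)).mpr (Nat.factorial_ne_zero _)).isUnit

lemma exists_k_point_fin [Infinite k] :
    ∀ (m : ℕ) (g : MvPolynomial (Fin m) K), g ≠ 0 →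
      ∃ c : Fin m → k, eval (fun i => algebraMap k K (c i)) g ≠ 0 := by
  intro m
  induction m with
  | zero =>
    intro g hg
    obtain ⟨a, rfl⟩ := C_surjective (Fin 0) g
    exact ⟨fun i => 0, by simpa using fun h => hg (by rw [h, map_zero])⟩
  | succ m ih =>
    intro g hg
    set p := MvPolynomial.finSuccEquiv K m g with hp
    have hp0 : p ≠ 0 := fun h => hg (by
      have := congrArg (MvPolynomial.finSuccEquiv K m).symm h
      simpa [hp] using this)
    have hlc : p.leadingCoeff ≠ 0 := Polynomial.leadingCoeff_ne_zero.mpr hp0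
    obtain ⟨c, hc⟩ := ih p.leadingCoeff hlc
    set φc : MvPolynomial (Fin m) K →+* K := eval (fun i => algebraMap k K (c i)) with hφc
    set q : Polynomial K := p.map φc with hq
    have hq0 : q ≠ 0 := by
      intro h
      apply hc
      have h2 : q.coeff p.natDegree = 0 := by rw [h]; simp
      rw [hq, Polynomial.coeff_map] at h2
      exact h2
    -- find a : k with q.eval (algebraMap k K a) ≠ 0
    have hfin : {a : k | Polynomial.eval (algebraMap k K a) q = 0}.Finite := by
      have : {a : k | Polynomial.eval (algebraMap k K a) q = 0}
          ⊆ (algebraMap k K) ⁻¹' {x : K | Polynomial.eval x q = 0} := fun a ha => ha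
      refine Set.Finite.subset (Set.Finite.preimage
        (Function.Injective.injOn (algebraMap k K).injective) ?_) this
      exact Polynomial.finite_setOf_isRoot hq0
    obtain ⟨a, ha⟩ := hfin.infinite_compl.nonempty
    refine ⟨(Fin.cons a c : Fin (m+1) → k), ?_⟩
    have hcons : (fun i => algebraMap k K ((Fin.cons a c : Fin (m+1) → k) i))
        = Fin.cons (algebraMap k K a) (fun i => algebraMap k K (c i)) := by
      funext i
      refine Fin.cases ?_ ?_ i <;> simp
    rw [hcons, eval_eq_eval_mv_eval']
    exact ha

lemma exists_k_point [Infinite k] {σ : Type} [Fintype σ] (g : MvPolynomial σ K) (hg : g ≠ 0) :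
    ∃ c : σ → k, eval (fun i => algebraMap k K (c i)) g ≠ 0 := by
  set e := Fintype.equivFin σ with he
  have hr : rename ⇑e g ≠ 0 := fun h => hg (by
    have := (rename_injective (R := K) ⇑e e.injective)
    exact this (by rw [h, map_zero]))
  obtain ⟨c, hc⟩ := exists_k_point_fin (k := k) _ _ hr
  refine ⟨c ∘ e, ?_⟩
  rw [show (fun i => algebraMap k K ((c ∘ e) i)) = (fun i => algebraMap k K (c i)) ∘ ⇑e from rfl]
  rw [← eval_rename]
  exact hc

lemma iterD_const_mul (D : Derivation k K K) (a : k) (x : K) :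
    ∀ j : ℕ, (⇑D)^[j] (algebraMap k K a * x) = algebraMap k K a * (⇑D)^[j] x := by
  intro j
  induction j with
  | zero => rfl
  | succ j ih =>
    rw [Function.iterate_succ_apply', ih, Function.iterate_succ_apply',
      Derivation.leibniz, D.map_algebraMap]
    simp [smul_eq_mul]

lemma iterD_sum (D : Derivation k K K) {ι : Type} (s : Finset ι) (u : ι → K) (j : ℕ) :
    (⇑D)^[j] (∑ r ∈ s, u r) = ∑ r ∈ s, (⇑D)^[j] (u r) := by
  induction j with
  | zero => rfl
  | succ j ih =>
    rw [Function.iterate_succ_apply', ih, map_sum]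
    exact sum_congr rfl fun r _ => (Function.iterate_succ_apply' ⇑D j (u r)).symm

lemma subst_left_inv {n N : ℕ} (MW : Matrix (Fin N) (Fin N) K) (h : IsUnit MW.det) :
    ∀ y : MvPolynomial (Fin n × Fin N) K,
      aeval (R := K) (fun p : Fin n × Fin N => ∑ r : Fin N, C (MW⁻¹ p.2 r) * X (p.1, r))
        (aeval (R := K) (fun p : Fin n × Fin N => ∑ r : Fin N, C (MW p.2 r) * X (p.1, r)) y)
        = y := by
  set Λ := aeval (R := K) (fun p : Fin n × Fin N => ∑ r : Fin N, C (MW p.2 r) * X (p.1, r))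
  set Λ' := aeval (R := K) (fun p : Fin n × Fin N => ∑ r : Fin N, C (MW⁻¹ p.2 r) * X (p.1, r))
  have : Λ'.comp Λ = AlgHom.id K (MvPolynomial (Fin n × Fin N) K) := by
    apply MvPolynomial.algHom_ext
    intro p
    simp only [AlgHom.comp_apply, AlgHom.id_apply, Λ, Λ', aeval_X]
    rw [map_sum]
    simp only [map_mul, aeval_C, aeval_X, MvPolynomial.algebraMap_eq]
    calc ∑ r : Fin N, C (MW p.2 r) * ∑ s : Fin N, C (MW⁻¹ r s) * X (p.1, s)
        = ∑ r : Fin N, ∑ s : Fin N, (C (MW p.2 r) * C (MW⁻¹ r s)) * X (p.1, s) := by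
          refine sum_congr rfl fun r _ => ?_
          rw [Finset.mul_sum]
          exact sum_congr rfl fun s _ => by ring
      _ = ∑ s : Fin N, (∑ r : Fin N, C (MW p.2 r * MW⁻¹ r s)) * X (p.1, s) := by
          rw [Finset.sum_comm]
          exact sum_congr rfl fun s _ => by rw [Finset.sum_mul]; simp [C_mul]
      _ = ∑ s : Fin N, C ((MW * MW⁻¹) p.2 s) * X (p.1, s) := by
          refine sum_congr rfl fun s _ => ?_
          rw [← map_sum, Matrix.mul_apply]
      _ = X p := by
          rw [Matrix.mul_nonsing_inv _ h]
          simp only [Matrix.one_apply, apply_ite C, map_one, map_zero, ite_mul, one_mul,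
            zero_mul, Finset.sum_ite_eq, Finset.mem_univ, if_true]
  exact fun y => AlgHom.congr_fun this y

end Aux

/-- Evaluation of a differential polynomial `f ∈ MvPolynomial (Fin n × ℕ) k`
(the variable `X (i, j)` stands for the `j`-th derivative of the `i`-th generator)
in a commutative associative `k`-algebra `A` with derivation `D` at `v : Fin n → A`. -/
noncomputable def diffEval {k : Type} [Field k] {A : Type} [CommRing A] [Algebra k A]
    (D : Derivation k A A) {n : ℕ} (v : Fin n → A) (f : MvPolynomial (Fin n × ℕ) k) : A :=
  MvPolynomial.aeval (fun p : Fin n × ℕ => (⇑D)^[p.2] (v p.1)) f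

/-- A field extension `K` of a field `k` of characteristic zero equipped with a nonzero
`k`-linear derivation satisfies no nontrivial differential identity. -/
theorem field_satisfies_no_differential_identity
    (k : Type) [Field k] [CharZero k]
    (K : Type) [Field K] [Algebra k K] (D : Derivation k K K) (hD : D ≠ 0)
    (n : ℕ) (hn : 1 ≤ n)
    (f : MvPolynomial (Fin n × ℕ) k) (hf : f ≠ 0) :
    ∃ v : Fin n → K, diffEval D v f ≠ 0 := by
  have hkK : Function.Injective (algebraMap k K) := (algebraMap k K).injective
  haveI : CharZero K := charZero_of_injective_algebraMap hkK
  obtain ⟨t, ht⟩ : ∃ t : K, D t ≠ 0 := by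
    by_contra h
    push_neg at h
    exact hD (by ext x; simp [h x])
  obtain ⟨m, gf, ginj, q, rfl⟩ := exists_fin_rename f
  have hq0 : q ≠ 0 := fun h => hf (by rw [h, map_zero])
  set N : ℕ := (univ.sup fun l : Fin m => (gf l).2) + 1 with hN
  have hlt : ∀ l, (gf l).2 < N := fun l => Nat.lt_succ_of_le (Finset.le_sup (f := fun l => (gf l).2) (mem_univ l))
  set g2 : Fin m → Fin n × Fin N := fun l => ((gf l).1, ⟨(gf l).2, hlt l⟩) with hg2
  have hg2inj : Function.Injective g2 := by
    intro a b hab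
    apply ginj
    have h1 := congrArg Prod.fst hab
    have h2 := congrArg (fun p : Fin n × Fin N => ((p.2 : Fin N) : ℕ)) hab
    simp only [hg2] at h1 h2
    exact Prod.ext h1 h2
  set MW : Matrix (Fin N) (Fin N) K :=
    Matrix.of (fun j r : Fin N => (⇑D)^[(j : ℕ)] (t ^ (r : ℕ))) with hMW
  have hdet : IsUnit MW.det := wronsk_isUnit D t ht N
  set Q : MvPolynomial (Fin m) K := map (algebraMap k K) q with hQ
  have hQ0 : Q ≠ 0 := fun h => hq0 (map_injective _ hkK (by rw [map_zero, ← hQ]; exact h))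
  have hRQ0 : rename g2 Q ≠ 0 := fun h =>
    hQ0 (rename_injective g2 hg2inj (by rw [map_zero]; exact h))
  set LF : Fin n × Fin N → MvPolynomial (Fin n × Fin N) K :=
    fun p => ∑ r : Fin N, C (MW p.2 r) * X (p.1, r) with hLF
  set G : MvPolynomial (Fin n × Fin N) K := aeval (R := K) LF (rename g2 Q) with hG
  have hG0 : G ≠ 0 := by
    intro h
    apply hRQ0
    have := subst_left_inv MW hdet (rename g2 Q)
    rw [← hLF, ← hG, h, map_zero] at this
    exact this.symm
  haveI : Infinite k := CharZero.infinite k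
  obtain ⟨c, hc⟩ := exists_k_point (k := k) G hG0
  set x : Fin n × Fin N → K := fun p => algebraMap k K (c p) with hx
  set v : Fin n → K := fun i => ∑ r : Fin N, algebraMap k K (c (i, r)) * t ^ (r : ℕ) with hv
  refine ⟨v, ?_⟩
  have hkey : ∀ (j : ℕ) (i : Fin n),
      (⇑D)^[j] (v i) = ∑ r : Fin N, algebraMap k K (c (i, r)) * (⇑D)^[j] (t ^ (r : ℕ)) := by
    intro j i
    rw [hv]
    rw [iterD_sum]
    exact sum_congr rfl fun r _ => iterD_const_mul D _ _ j
  have main : diffEval D v (rename gf q) = eval x G := by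
    rw [diffEval, aeval_rename, aeval_def]
    rw [hG, aeval_def, MvPolynomial.algebraMap_eq]
    rw [eval₂_comp_left (eval x) C LF]
    have hid : (eval x).comp C = RingHom.id K := RingHom.ext fun a => eval_C a
    rw [hid, eval₂_id, eval_rename, hQ, eval_map]
    congr 1
    funext l
    simp only [Function.comp_apply, hLF, map_sum, map_mul, eval_C, eval_X, hkey, hMW,
      Matrix.of_apply, hg2, hx]
    exact sum_congr rfl fun r _ => mul_comm _ _
  rw [main]
  exact hc
end

section
/- Let k be a field of characteristic zero and work in R = MvPolynomial (ℕ × ℕ) k with the derivation d determined by d (X (i, j)) = X (i, j+1) and the Novikov product a ∘ b := a * d b. Let W ⊆ R be the smallest k-submodule containing all variables X (i, 0) and closed under ∘ (its elements are the Novikov elements). Let k₀ ≥ 1 and let f ∈ R be nonzero and multilinear in the generators 0, …, k₀−1 (a k-linear combination of monomials ∏_{i < k₀} X (i, j i), each generator i < k₀ occurring exactly once and no other generator occurring). Let V be the smallest k-submodule of R containing f and closed under the operations v ↦ v ∘ g and v ↦ g ∘ v for every g ∈ W, and v ↦ φ_g v for every g : ℕ → W, where φ_g is the algebra endomorphism of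 R with φ_g (X (i, j)) = d^[j] (g i). Then there exist p, q ≥ 1 such that the monomial X (0, 2) * ⋯ * X (p−1, 2) * X (p, 0) * ⋯ * X (p+q−1, 0) belongs to V. -/
open MvPolynomial

/-- The derivation `d` of the free differential commutative algebra
`MvPolynomial (ℕ × ℕ) k` with `d (X (i, j)) = X (i, j + 1)`. -/
noncomputable def dNov (k : Type) [Field k] :
    Derivation k (MvPolynomial (ℕ × ℕ) k) (MvPolynomial (ℕ × ℕ) k) :=
  MvPolynomial.mkDerivation k (fun p : ℕ × ℕ => MvPolynomial.X (p.1, p.2 + 1))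

/-- The smallest `k`-submodule of `MvPolynomial (ℕ × ℕ) k` containing all the variables
`X (i, 0)` and closed under the Novikov product `a ∘ b = a * d b`: the space of Novikov
elements. -/
noncomputable def novikovSpan (k : Type) [Field k] : Submodule k (MvPolynomial (ℕ × ℕ) k) :=
  sInf {W : Submodule k (MvPolynomial (ℕ × ℕ) k) |
    (∀ i : ℕ, MvPolynomial.X (i, 0) ∈ W) ∧
    ∀ a ∈ W, ∀ b ∈ W, a * dNov k b ∈ W}

/-- The smallest `k`-submodule of `MvPolynomial (ℕ × ℕ) k` containing `f`, closed under
right and left Novikov multiplications by Novikov elements, and closed under Novikov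
substitutions: the infinitesimal `Nov`-bimodule generated by `f`. -/
noncomputable def novBimodule (k : Type) [Field k] (f : MvPolynomial (ℕ × ℕ) k) :
    Submodule k (MvPolynomial (ℕ × ℕ) k) :=
  sInf {V : Submodule k (MvPolynomial (ℕ × ℕ) k) |
    f ∈ V ∧
    (∀ v ∈ V, ∀ g ∈ novikovSpan k, v * dNov k g ∈ V ∧ g * dNov k v ∈ V) ∧
    (∀ v ∈ V, ∀ g : ℕ → MvPolynomial (ℕ × ℕ) k, (∀ i, g i ∈ novikovSpan k) →
      MvPolynomial.aeval (fun p : ℕ × ℕ => (⇑(dNov k))^[p.2] (g p.1)) v ∈ V)}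

section NovAux2
variable (k : Type) [Field k]

lemma dNov_X' (i j : ℕ) : dNov k (X (i, j)) = X (i, j + 1) :=
  MvPolynomial.mkDerivation_X k (fun p : ℕ × ℕ => (X (p.1, p.2 + 1) : MvPolynomial (ℕ × ℕ) k)) (i, j)

lemma X_mem_novikovSpan (i : ℕ) : (X (i, 0) : MvPolynomial (ℕ × ℕ) k) ∈ novikovSpan k :=
  Submodule.mem_sInf.2 fun _ hW => hW.1 i

lemma mul_dNov_mem_novikovSpan {a b : MvPolynomial (ℕ × ℕ) k}
    (ha : a ∈ novikovSpan k) (hb : b ∈ novikovSpan k) : a * dNov k b ∈ novikovSpan k :=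
  Submodule.mem_sInf.2 fun W hW =>
    hW.2 a (Submodule.mem_sInf.1 ha W hW) b (Submodule.mem_sInf.1 hb W hW)

lemma chain_mem_novikovSpan (b : ℕ) (c : ℕ → ℕ) (S : Finset ℕ) :
    ((X (b, 0) * ∏ r ∈ S, X (c r, 1)) : MvPolynomial (ℕ × ℕ) k) ∈ novikovSpan k := by
  classical
  induction S using Finset.induction_on with
  | empty => simpa using X_mem_novikovSpan k b
  | insert a S ha ih =>
      rw [Finset.prod_insert ha]
      have : (X (b, 0) * (X (c a, 1) * ∏ r ∈ S, X (c r, 1)) : MvPolynomial (ℕ × ℕ) k)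
          = (X (b, 0) * ∏ r ∈ S, X (c r, 1)) * dNov k (X (c a, 0)) := by
        rw [dNov_X']; ring
      rw [this]
      exact mul_dNov_mem_novikovSpan k ih (X_mem_novikovSpan k (c a))

variable (f : MvPolynomial (ℕ × ℕ) k)

lemma self_mem_novBimodule : f ∈ novBimodule k f :=
  Submodule.mem_sInf.2 fun _ hV => hV.1

lemma rmul_mem_novBimodule {v g : MvPolynomial (ℕ × ℕ) k}
    (hv : v ∈ novBimodule k f) (hg : g ∈ novikovSpan k) :
    v * dNov k g ∈ novBimodule k f :=
  Submodule.mem_sInf.2 fun W hW =>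
    (hW.2.1 v (Submodule.mem_sInf.1 hv W hW) g hg).1

lemma subst_mem_novBimodule {v : MvPolynomial (ℕ × ℕ) k}
    (hv : v ∈ novBimodule k f) (g : ℕ → MvPolynomial (ℕ × ℕ) k)
    (hg : ∀ i, g i ∈ novikovSpan k) :
    MvPolynomial.aeval (fun p : ℕ × ℕ => (⇑(dNov k))^[p.2] (g p.1)) v ∈ novBimodule k f :=
  Submodule.mem_sInf.2 fun W hW =>
    hW.2.2 v (Submodule.mem_sInf.1 hv W hW) g hg

end NovAux2

section NovAux

variable (k : Type) [Field k]

lemma dNov_X (i j : ℕ) : dNov k (X (i, j)) = X (i, j + 1) :=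
  MvPolynomial.mkDerivation_X k (fun p : ℕ × ℕ => (X (p.1, p.2 + 1) : MvPolynomial (ℕ × ℕ) k)) (i, j)

lemma dNov_iter_X (r i j : ℕ) :
    (⇑(dNov k))^[r] (X (i, j) : MvPolynomial (ℕ × ℕ) k) = X (i, j + r) := by
  induction r with
  | zero => rfl
  | succ n ih =>
      rw [Function.iterate_succ_apply', ih, dNov_X, ← Nat.add_assoc]

lemma dNov_iter_add (s : ℕ) (x y : MvPolynomial (ℕ × ℕ) k) :
    (⇑(dNov k))^[s] (x + y) = (⇑(dNov k))^[s] x + (⇑(dNov k))^[s] y := by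
  induction s generalizing x y with
  | zero => rfl
  | succ n ih =>
      rw [Function.iterate_succ_apply, Function.iterate_succ_apply,
        Function.iterate_succ_apply, map_add, ih]

lemma dNov_iter_smul (s : ℕ) (a : k) (x : MvPolynomial (ℕ × ℕ) k) :
    (⇑(dNov k))^[s] (a • x) = a • (⇑(dNov k))^[s] x := by
  induction s generalizing x with
  | zero => rfl
  | succ n ih =>
      rw [Function.iterate_succ_apply, Function.iterate_succ_apply,
        Derivation.map_smul, ih]

lemma dNov_iter_mul (s : ℕ) (x y : MvPolynomial (ℕ × ℕ) k) :
    (⇑(dNov k))^[s] (x * y)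
      = ∑ r ∈ Finset.range (s + 1),
          (s.choose r) • ((⇑(dNov k))^[s - r] x * (⇑(dNov k))^[r] y) := by
  induction s generalizing x y with
  | zero => simp
  | succ n ih =>
      rw [Function.iterate_succ_apply, Derivation.leibniz, smul_eq_mul, smul_eq_mul,
        dNov_iter_add, ih, ih]
      have h1 : ∀ r, (⇑(dNov k))^[r] (dNov k y) = (⇑(dNov k))^[r + 1] y := fun r => by
        rw [Function.iterate_succ_apply]
      have h2 : ∀ r, (⇑(dNov k))^[r] (dNov k x) = (⇑(dNov k))^[r + 1] x := fun r => by
        rw [Function.iterate_succ_apply]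
      simp only [h1, h2]
      have hB : (∑ r ∈ Finset.range n,
            (n.choose r) • ((⇑(dNov k))^[n - r] y * (⇑(dNov k))^[r + 1] x))
          = ∑ r ∈ Finset.range n,
            (n.choose (r + 1)) • ((⇑(dNov k))^[n - r] x * (⇑(dNov k))^[r + 1] y) := by
        rw [← Finset.sum_range_reflect
          (fun r => (n.choose r) • ((⇑(dNov k))^[n - r] y * (⇑(dNov k))^[r + 1] x)) n]
        refine Finset.sum_congr rfl ?_
        intro j hj
        simp only [Finset.mem_range] at hj
        have e1 : n - 1 - j + 1 = n - j := by omega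
        have e2 : n - (n - 1 - j) = j + 1 := by omega
        have e3 : n.choose (n - 1 - j) = n.choose (j + 1) := by
          have := Nat.choose_symm (n := n) (k := j + 1) (by omega)
          rw [show n - (j + 1) = n - 1 - j by omega] at this
          exact this
        rw [e1, e2, e3, mul_comm]
      -- split the second (y,x) sum at its top index
      rw [Finset.sum_range_succ
        (f := fun r => (n.choose r) • ((⇑(dNov k))^[n - r] y * (⇑(dNov k))^[r + 1] x))]
      rw [hB]
      -- split the RHS
      rw [Finset.sum_range_succ'
        (f := fun r => ((n + 1).choose r) • ((⇑(dNov k))^[n + 1 - r] x * (⇑(dNov k))^[r] y))]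
      simp only [Nat.succ_sub_succ, Nat.choose_succ_succ, add_smul, Finset.sum_add_distrib,
        Nat.choose_zero_right, one_smul, Nat.sub_zero, Function.iterate_zero, id_eq,
        Nat.sub_self, Nat.choose_self]
      rw [Finset.sum_range_succ
        (f := fun r => (n.choose (r + 1)) • ((⇑(dNov k))^[n - r] x * (⇑(dNov k))^[r + 1] y))]
      simp only [Nat.choose_succ_self, zero_smul, add_zero, Nat.sub_self,
        Function.iterate_zero, id_eq, one_smul]
      ring

end NovAux

section FelSection
variable (k : Type) [Field k] (b : ℕ) (c : ℕ → ℕ)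

/-- The alternating substitution combination at one variable. -/
noncomputable def Fel (n s : ℕ) : MvPolynomial (ℕ × ℕ) k :=
  ∑ S ∈ (Finset.range n).powerset,
    ((-1 : k) ^ (n - S.card)) •
      ((⇑(dNov k))^[s] (X (b, 0) * ∏ r ∈ S, X (c r, 1)) * ∏ r ∈ Finset.range n \ S, X (c r, 1))

lemma Fel_zero_eq (s : ℕ) : Fel k b c 0 s = (⇑(dNov k))^[s] (X (b, 0)) := by
  simp [Fel]

lemma Fel_succ (n s : ℕ) :
    Fel k b c (n + 1) s
      = ∑ r ∈ Finset.range s,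
          (s.choose (r + 1)) • (Fel k b c n (s - (r + 1)) * X (c n, r + 2)) := by
  classical
  unfold Fel
  rw [Finset.range_add_one, Finset.sum_powerset_insert Finset.notMem_range_self]
  have hsplit : ∀ S ∈ (Finset.range n).powerset,
      ((-1 : k) ^ (n + 1 - (insert n S).card)) •
        ((⇑(dNov k))^[s] (X (b, 0) * ∏ r ∈ insert n S, X (c r, 1)) *
          ∏ r ∈ insert n (Finset.range n) \ insert n S, X (c r, 1))
      = ((-1 : k) ^ (n - S.card)) •
          ((∑ r ∈ Finset.range (s + 1),
              (s.choose r) • ((⇑(dNov k))^[s - r] (X (b, 0) * ∏ r ∈ S, X (c r, 1)) *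
                X (c n, 1 + r))) * ∏ r ∈ Finset.range n \ S, X (c r, 1)) := by
    intro S hS
    simp only [Finset.mem_powerset] at hS
    have hnS : n ∉ S := fun h => Finset.notMem_range_self (hS h)
    have hcard : (insert n S).card = S.card + 1 := Finset.card_insert_of_notMem hnS
    have hSle : S.card ≤ n := by
      have := Finset.card_le_card hS
      simpa using this
    have hsign : (-1 : k) ^ (n + 1 - (insert n S).card) = (-1 : k) ^ (n - S.card) := by
      rw [hcard]; congr 1; omega
    have hsd : insert n (Finset.range n) \ insert n S = Finset.range n \ S := by
      ext x
      simp only [Finset.mem_sdiff, Finset.mem_insert, Finset.mem_range]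
      constructor
      · rintro ⟨hx1, hx2⟩
        rcases hx1 with rfl | hx1
        · exact absurd (Or.inl rfl) hx2
        · exact ⟨hx1, fun h => hx2 (Or.inr h)⟩
      · rintro ⟨hx1, hx2⟩
        exact ⟨Or.inr hx1, fun h => by
          rcases h with rfl | h
          · exact absurd hx1 (lt_irrefl _)
          · exact hx2 h⟩
    have hw : (X (b, 0) * ∏ r ∈ insert n S, X (c r, 1) : MvPolynomial (ℕ × ℕ) k)
        = (X (b, 0) * ∏ r ∈ S, X (c r, 1)) * X (c n, 1) := by
      rw [Finset.prod_insert hnS]; ring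
    rw [hsign, hsd, hw, dNov_iter_mul]
    congr 2
    refine Finset.sum_congr rfl ?_
    intro r _
    rw [dNov_iter_X]
  rw [Finset.sum_congr rfl hsplit]
  have hB : ∀ S ∈ (Finset.range n).powerset,
      ((-1 : k) ^ (n + 1 - S.card)) •
        ((⇑(dNov k))^[s] (X (b, 0) * ∏ r ∈ S, X (c r, 1)) *
          ∏ r ∈ insert n (Finset.range n) \ S, X (c r, 1))
      = -(((-1 : k) ^ (n - S.card)) •
          ((⇑(dNov k))^[s] (X (b, 0) * ∏ r ∈ S, X (c r, 1)) *
            (X (c n, 1) * ∏ r ∈ Finset.range n \ S, X (c r, 1)))) := by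
    intro S hS
    simp only [Finset.mem_powerset] at hS
    have hnS : n ∉ S := fun h => Finset.notMem_range_self (hS h)
    have hSle : S.card ≤ n := by
      have := Finset.card_le_card hS
      simpa using this
    have hsd : insert n (Finset.range n) \ S = insert n (Finset.range n \ S) := by
      ext x
      simp only [Finset.mem_sdiff, Finset.mem_insert, Finset.mem_range]
      constructor
      · rintro ⟨hx1, hx2⟩
        rcases hx1 with rfl | hx1
        · exact Or.inl rfl
        · exact Or.inr ⟨hx1, hx2⟩
      · rintro (rfl | ⟨hx1, hx2⟩)
        · exact ⟨Or.inl rfl, fun h => hnS h⟩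
        · exact ⟨Or.inr hx1, hx2⟩
    have hnotmem : n ∉ Finset.range n \ S := by
      simp [Finset.mem_sdiff]
    rw [hsd, Finset.prod_insert hnotmem]
    have hsign : (-1 : k) ^ (n + 1 - S.card) = -((-1 : k) ^ (n - S.card)) := by
      rw [show n + 1 - S.card = (n - S.card) + 1 by omega, pow_succ]
      ring
    rw [hsign, neg_smul]
  rw [Finset.sum_congr rfl hB]
  have hA : ∀ S ∈ (Finset.range n).powerset,
      ((-1 : k) ^ (n - S.card)) •
          ((∑ r ∈ Finset.range (s + 1),
              (s.choose r) • ((⇑(dNov k))^[s - r] (X (b, 0) * ∏ r ∈ S, X (c r, 1)) *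
                X (c n, 1 + r))) * ∏ r ∈ Finset.range n \ S, X (c r, 1))
      = (((-1 : k) ^ (n - S.card)) •
          ((⇑(dNov k))^[s] (X (b, 0) * ∏ r ∈ S, X (c r, 1)) *
            (X (c n, 1) * ∏ r ∈ Finset.range n \ S, X (c r, 1))))
        + ∑ r ∈ Finset.range s,
            (s.choose (r + 1)) •
              ((((-1 : k) ^ (n - S.card)) •
                ((⇑(dNov k))^[s - (r + 1)] (X (b, 0) * ∏ r ∈ S, X (c r, 1)) *
                  ∏ r ∈ Finset.range n \ S, X (c r, 1))) * X (c n, r + 2)) := by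
    intro S hS
    rw [Finset.sum_range_succ'
      (f := fun r => (s.choose r) • ((⇑(dNov k))^[s - r] (X (b, 0) * ∏ r ∈ S, X (c r, 1)) *
        X (c n, 1 + r)))]
    rw [add_mul, smul_add, Finset.sum_mul, Finset.smul_sum, add_comm]
    congr 1
    · simp only [Nat.choose_zero_right, one_smul, Nat.sub_zero, Nat.add_zero]
      rw [mul_assoc]
    · refine Finset.sum_congr rfl ?_
      intro r _
      have h12 : 1 + (r + 1) = r + 2 := by omega
      rw [h12, smul_mul_assoc, smul_comm, mul_right_comm, smul_mul_assoc]
  rw [Finset.sum_congr rfl hA]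
  rw [Finset.sum_add_distrib, Finset.sum_neg_distrib, neg_add_cancel_left]
  rw [Finset.sum_comm]
  refine Finset.sum_congr rfl ?_
  intro r _
  rw [← Finset.smul_sum, ← Finset.sum_mul]

end FelSection

section FelProps
variable (k : Type) [Field k] (b : ℕ) (c : ℕ → ℕ)

lemma Fel_eq_zero (n s : ℕ) (h : s < n) : Fel k b c n s = 0 := by
  induction n generalizing s with
  | zero => omega
  | succ n ih =>
      rw [Fel_succ]
      refine Finset.sum_eq_zero ?_
      intro r hr
      simp only [Finset.mem_range] at hr
      rw [ih (s - (r + 1)) (by omega), zero_mul, smul_zero]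

lemma Fel_top (n : ℕ) :
    Fel k b c n n = (n.factorial) • (X (b, 0) * ∏ r ∈ Finset.range n, X (c r, 2)) := by
  induction n with
  | zero => simp [Fel_zero_eq]
  | succ n ih =>
      rw [Fel_succ]
      rw [Finset.sum_eq_single 0]
      · simp only [Nat.choose_one_right, Nat.add_sub_cancel, zero_add]
        rw [ih, Finset.prod_range_succ, smul_mul_assoc, smul_smul,
          Nat.factorial_succ, mul_assoc]
      · intro r hr hr0
        rw [Fel_eq_zero k b c n (n + 1 - (r + 1)) (by simp only [Finset.mem_range] at hr; omega),
          zero_mul, smul_zero]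
      · intro h
        simp at h
  
lemma prod_X1_mem (f : MvPolynomial (ℕ × ℕ) k) {v : MvPolynomial (ℕ × ℕ) k}
    (hv : v ∈ novBimodule k f) (c' : ℕ → ℕ) (T : Finset ℕ) :
    v * ∏ r ∈ T, X (c' r, 1) ∈ novBimodule k f := by
  classical
  induction T using Finset.induction_on with
  | empty => simpa using hv
  | insert a T ha ih =>
      rw [Finset.prod_insert ha]
      have : (v * (X (c' a, 1) * ∏ r ∈ T, X (c' r, 1)) : MvPolynomial (ℕ × ℕ) k)
          = (v * ∏ r ∈ T, X (c' r, 1)) * dNov k (X (c' a, 0)) := by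
        rw [dNov_X']; ring
      rw [this]
      exact rmul_mem_novBimodule k f ih (X_mem_novikovSpan k (c' a))

end FelProps

section MainStep
variable (k : Type) [Field k] [CharZero k] (k₀ : ℕ)

/-- the fresh "zero-order" variable used at step `t` -/
def bbv (t : ℕ) : ℕ := k₀ + 2 + t
/-- the fresh "order-two" variables used at step `t` -/
def ccv (t r : ℕ) : ℕ := 2 * k₀ + 2 + Nat.pair t r

noncomputable def Gpart (NN : ℕ → ℕ) (i : ℕ) : MvPolynomial (ℕ × ℕ) k :=
  ∏ t ∈ Finset.range i,
    (X (bbv k₀ t, 0) * ∏ r ∈ Finset.range (NN t), X (ccv k₀ t r, 2))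

noncomputable def restPart (i : ℕ) (J : Fin k₀ → ℕ) : MvPolynomial (ℕ × ℕ) k :=
  ∏ t ∈ Finset.univ.filter (fun t : Fin k₀ => i ≤ (t : ℕ)), X ((t : ℕ), J t)

lemma restPart_split (i : ℕ) (hi : i < k₀) (J : Fin k₀ → ℕ) :
    restPart k k₀ i J = X ((i : ℕ), J ⟨i, hi⟩) * restPart k k₀ (i + 1) J := by
  unfold restPart
  have hins : Finset.univ.filter (fun t : Fin k₀ => i ≤ (t : ℕ))
      = insert ⟨i, hi⟩ (Finset.univ.filter (fun t : Fin k₀ => i + 1 ≤ (t : ℕ))) := by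
    ext t
    simp only [Finset.mem_filter, Finset.mem_univ, true_and, Finset.mem_insert, Fin.ext_iff]
    omega
  have hnm : (⟨i, hi⟩ : Fin k₀) ∉ Finset.univ.filter (fun t : Fin k₀ => i + 1 ≤ (t : ℕ)) := by
    simp
  rw [hins, Finset.prod_insert hnm]

lemma restPart_last (J : Fin k₀ → ℕ) : restPart k k₀ k₀ J = 1 := by
  unfold restPart
  rw [Finset.filter_false_of_mem, Finset.prod_empty]
  intro t _
  simp only [not_le]
  exact t.isLt

/-- The main elimination step. -/
lemma main_step (f : MvPolynomial (ℕ × ℕ) k) (i : ℕ) (hi : i < k₀)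
    (B : Finset (Fin k₀ → ℕ)) (co : (Fin k₀ → ℕ) → k) (NN : ℕ → ℕ) (n' : ℕ)
    (hmax : ∀ J ∈ B, J ⟨i, hi⟩ ≤ n')
    (hE : Gpart k k₀ NN i * (∑ J ∈ B, co J • restPart k k₀ i J) ∈ novBimodule k f) :
    Gpart k k₀ (Function.update NN i n') (i + 1) *
      (∑ J ∈ B.filter (fun J => J ⟨i, hi⟩ = n'), co J • restPart k k₀ (i + 1) J)
        ∈ novBimodule k f := by
  classical
  set E : MvPolynomial (ℕ × ℕ) k := Gpart k k₀ NN i * (∑ J ∈ B, co J • restPart k k₀ i J)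
    with hEdef
  -- the substitutions
  set w : Finset ℕ → MvPolynomial (ℕ × ℕ) k :=
    fun S => X (bbv k₀ i, 0) * ∏ r ∈ S, X (ccv k₀ i r, 1) with hw
  set g : Finset ℕ → ℕ → MvPolynomial (ℕ × ℕ) k :=
    fun S v => if v = i then w S else X (v, 0) with hg
  set Phi : Finset ℕ → (MvPolynomial (ℕ × ℕ) k →ₐ[k] MvPolynomial (ℕ × ℕ) k) := fun S =>
    MvPolynomial.aeval (fun p : ℕ × ℕ => (⇑(dNov k))^[p.2] (g S p.1)) with hPhi
  have hgW : ∀ S v, g S v ∈ novikovSpan k := by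
    intro S v
    by_cases h : v = i
    · rw [hg]; simp only [h, if_pos rfl]
      exact chain_mem_novikovSpan k (bbv k₀ i) (ccv k₀ i) S
    · rw [hg]; simp only [if_neg h]
      exact X_mem_novikovSpan k v
  -- membership of the alternating sum
  have hOmem : (∑ S ∈ (Finset.range n').powerset,
      ((-1 : k) ^ (n' - S.card)) •
        (Phi S E * ∏ r ∈ Finset.range n' \ S, X (ccv k₀ i r, 1))) ∈ novBimodule k f := by
    refine Submodule.sum_mem _ ?_
    intro S _
    refine Submodule.smul_mem _ _ ?_
    exact prod_X1_mem k f (subst_mem_novBimodule k f hE (g S) (hgW S)) (ccv k₀ i) _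
  -- the key identity
  have hOeq : (∑ S ∈ (Finset.range n').powerset,
      ((-1 : k) ^ (n' - S.card)) •
        (Phi S E * ∏ r ∈ Finset.range n' \ S, X (ccv k₀ i r, 1)))
      = (n'.factorial : k) •
          (Gpart k k₀ (Function.update NN i n') (i + 1) *
            (∑ J ∈ B.filter (fun J => J ⟨i, hi⟩ = n'), co J • restPart k k₀ (i + 1) J)) := by
    have hPhiX_ne : ∀ (S : Finset ℕ) (v j : ℕ), v ≠ i →
        Phi S (X (v, j)) = X (v, j) := by
      intro S v j hv
      rw [hPhi]
      simp only [MvPolynomial.aeval_X]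
      rw [hg]
      simp only [if_neg hv]
      rw [dNov_iter_X, Nat.zero_add]
    have hPhiX_i : ∀ (S : Finset ℕ) (j : ℕ),
        Phi S (X (i, j)) = (⇑(dNov k))^[j] (w S) := by
      intro S j
      rw [hPhi]
      simp only [MvPolynomial.aeval_X]
      rw [hg]
      simp
    have hPhiG : ∀ S : Finset ℕ, Phi S (Gpart k k₀ NN i) = Gpart k k₀ NN i := by
      intro S
      unfold Gpart
      rw [map_prod]
      refine Finset.prod_congr rfl ?_
      intro t ht
      simp only [Finset.mem_range] at ht
      rw [map_mul, map_prod, hPhiX_ne S _ _ (by unfold bbv; omega)]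
      congr 1
      refine Finset.prod_congr rfl ?_
      intro r _
      exact hPhiX_ne S _ _ (by unfold ccv; omega)
    have hPhiRest : ∀ (S : Finset ℕ) (J : Fin k₀ → ℕ),
        Phi S (restPart k k₀ (i + 1) J) = restPart k k₀ (i + 1) J := by
      intro S J
      unfold restPart
      rw [map_prod]
      refine Finset.prod_congr rfl ?_
      intro t ht
      simp only [Finset.mem_filter] at ht
      exact hPhiX_ne S _ _ (by omega)
    have hPhiE : ∀ S : Finset ℕ,
        Phi S E = Gpart k k₀ NN i *
          ∑ J ∈ B, co J •
            ((⇑(dNov k))^[J ⟨i, hi⟩] (w S) * restPart k k₀ (i + 1) J) := by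
      intro S
      rw [hEdef, map_mul, hPhiG, map_sum]
      congr 1
      refine Finset.sum_congr rfl ?_
      intro J _
      rw [map_smul, restPart_split k k₀ i hi J, map_mul, hPhiX_i, hPhiRest]
    -- canonical double sum
    have hcanon1 : (∑ S ∈ (Finset.range n').powerset,
        ((-1 : k) ^ (n' - S.card)) •
          (Phi S E * ∏ r ∈ Finset.range n' \ S, X (ccv k₀ i r, 1)))
        = ∑ S ∈ (Finset.range n').powerset, ∑ J ∈ B,
            (co J * (-1 : k) ^ (n' - S.card)) •
              (Gpart k k₀ NN i *
                ((⇑(dNov k))^[J ⟨i, hi⟩] (w S) *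
                  ((∏ r ∈ Finset.range n' \ S, X (ccv k₀ i r, 1)) *
                    restPart k k₀ (i + 1) J))) := by
      refine Finset.sum_congr rfl ?_
      intro S _
      rw [hPhiE S, Finset.mul_sum, Finset.sum_mul, Finset.smul_sum]
      refine Finset.sum_congr rfl ?_
      intro J _
      rw [mul_smul_comm, smul_mul_assoc, smul_smul, mul_comm ((-1 : k) ^ (n' - S.card))]
      congr 1
      ring
    have hcanon2 : ∀ J ∈ B,
        (∑ S ∈ (Finset.range n').powerset,
          (co J * (-1 : k) ^ (n' - S.card)) •
            (Gpart k k₀ NN i *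
              ((⇑(dNov k))^[J ⟨i, hi⟩] (w S) *
                ((∏ r ∈ Finset.range n' \ S, X (ccv k₀ i r, 1)) *
                  restPart k k₀ (i + 1) J))))
        = co J • (Gpart k k₀ NN i *
            (Fel k (bbv k₀ i) (ccv k₀ i) n' (J ⟨i, hi⟩) * restPart k k₀ (i + 1) J)) := by
      intro J _
      unfold Fel
      rw [Finset.sum_mul, Finset.mul_sum, Finset.smul_sum]
      refine Finset.sum_congr rfl ?_
      intro S _
      simp only [hw]
      conv_rhs => rw [smul_mul_assoc, mul_smul_comm, smul_smul]
      congr 1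
      ring
    rw [hcanon1, Finset.sum_comm, Finset.sum_congr rfl hcanon2]
    have hGnew : Gpart k k₀ (Function.update NN i n') (i + 1)
        = Gpart k k₀ NN i *
            (X (bbv k₀ i, 0) * ∏ r ∈ Finset.range n', X (ccv k₀ i r, 2)) := by
      unfold Gpart
      rw [Finset.prod_range_succ]
      congr 1
      · refine Finset.prod_congr rfl ?_
        intro t ht
        simp only [Finset.mem_range] at ht
        rw [Function.update_of_ne (by omega)]
      · rw [Function.update_self]
    have hsel : ∀ J ∈ B, co J • (Gpart k k₀ NN i *
          (Fel k (bbv k₀ i) (ccv k₀ i) n' (J ⟨i, hi⟩) * restPart k k₀ (i + 1) J))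
        = if J ⟨i, hi⟩ = n' then
            (n'.factorial : k) •
              (co J • (Gpart k k₀ (Function.update NN i n') (i + 1) * restPart k k₀ (i + 1) J))
          else 0 := by
      intro J hJ
      by_cases h : J ⟨i, hi⟩ = n'
      · rw [if_pos h, h, Fel_top, hGnew]
        rw [smul_mul_assoc, mul_smul_comm, smul_comm, ← Nat.cast_smul_eq_nsmul k]
        congr 2
        ring
      · rw [if_neg h]
        rw [Fel_eq_zero k _ _ n' _ (lt_of_le_of_ne (hmax J hJ) h), zero_mul, mul_zero,
          smul_zero]
    rw [Finset.sum_congr rfl hsel, ← Finset.sum_filter, ← Finset.smul_sum]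
    congr 1
    rw [Finset.mul_sum]
    refine Finset.sum_congr rfl ?_
    intro J _
    rw [mul_smul_comm]
  rw [hOeq] at hOmem
  have hne : ((n'.factorial : k)) ≠ 0 := by
    exact_mod_cast Nat.cast_ne_zero.mpr (Nat.factorial_ne_zero n')
  have := Submodule.smul_mem (novBimodule k f) ((n'.factorial : k))⁻¹ hOmem
  rwa [smul_smul, inv_mul_cancel₀ hne, one_smul] at this

end MainStep

section OffLemma
variable (k : Type) [Field k]

lemma off_prod_lemma (n : ℕ) (F : ℕ → ℕ) :
    (∏ t ∈ Finset.range n, ∏ r ∈ Finset.range (F t),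
      (X ((∑ t' ∈ Finset.range t, F t') + r, 2) : MvPolynomial (ℕ × ℕ) k))
    = ∏ j ∈ Finset.range (∑ t ∈ Finset.range n, F t), X (j, 2) := by
  induction n with
  | zero => simp
  | succ n ih =>
      rw [Finset.prod_range_succ, ih, Finset.sum_range_succ, Finset.prod_range_add]

end OffLemma


/-- For a nonzero multilinear differential polynomial `f`, the infinitesimal
`Nov`-bimodule of the free differential commutative algebra generated by `f` contains a
monomial `X (0,2) ⋯ X (p-1,2) · X (p,0) ⋯ X (p+q-1,0)`. -/
theorem novBimodule_contains_special_monomial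
    (k : Type) [Field k] [CharZero k]
    (k₀ : ℕ) (hk₀ : 1 ≤ k₀)
    (f : MvPolynomial (ℕ × ℕ) k) (hf : f ≠ 0)
    (hml : f ∈ Submodule.span k
      {m : MvPolynomial (ℕ × ℕ) k |
        ∃ j : Fin k₀ → ℕ, m = ∏ i : Fin k₀, MvPolynomial.X ((i : ℕ), j i)}) :
    ∃ p q : ℕ, 1 ≤ p ∧ 1 ≤ q ∧
      (∏ i : Fin p, MvPolynomial.X ((i : ℕ), 2)) *
        (∏ i : Fin q, MvPolynomial.X ((p + (i : ℕ), 0) : ℕ × ℕ)) ∈ novBimodule k f := by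
  classical
  -- get the coefficient representation of `f`
  have hsetrange : {m : MvPolynomial (ℕ × ℕ) k |
        ∃ j : Fin k₀ → ℕ, m = ∏ i : Fin k₀, X ((i : ℕ), j i)}
      = Set.range (fun J : Fin k₀ → ℕ => ∏ i : Fin k₀, X ((i : ℕ), J i)) := by
    ext m
    simp only [Set.mem_setOf_eq, Set.mem_range]
    constructor
    · rintro ⟨j, rfl⟩; exact ⟨j, rfl⟩
    · rintro ⟨j, rfl⟩; exact ⟨j, rfl⟩
  rw [hsetrange] at hml
  obtain ⟨cf, hcf⟩ := Finsupp.mem_span_range_iff_exists_finsupp.mp hml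
  have hcfne : cf ≠ 0 := by
    rintro rfl
    rw [Finsupp.sum_zero_index] at hcf
    exact hf hcf.symm
  have hBne : cf.support.Nonempty := Finsupp.support_nonempty_iff.mpr hcfne
  have hrest0 : ∀ J : Fin k₀ → ℕ, restPart k k₀ 0 J = ∏ i : Fin k₀, X ((i : ℕ), J i) := by
    intro J
    unfold restPart
    rw [Finset.filter_true_of_mem (fun _ _ => Nat.zero_le _)]
  -- the main loop
  have loop : ∀ i : ℕ, i ≤ k₀ → ∃ (B : Finset (Fin k₀ → ℕ)) (NN : ℕ → ℕ),
      B.Nonempty ∧ B ⊆ cf.support ∧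
      (∀ J ∈ B, ∀ t : ℕ, ∀ ht : t < k₀, t < i → J ⟨t, ht⟩ = NN t) ∧
      Gpart k k₀ NN i * (∑ J ∈ B, cf J • restPart k k₀ i J) ∈ novBimodule k f := by
    intro i
    induction i with
    | zero =>
        intro _
        refine ⟨cf.support, fun _ => 0, hBne, le_refl _, fun _ _ _ _ h => by omega, ?_⟩
        have : Gpart k k₀ (fun _ => 0) 0 * (∑ J ∈ cf.support, cf J • restPart k k₀ 0 J)
            = f := by
          unfold Gpart
          rw [Finset.range_zero, Finset.prod_empty, one_mul, ← hcf, Finsupp.sum]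
          refine Finset.sum_congr rfl ?_
          intro J _
          rw [hrest0]
        rw [this]
        exact self_mem_novBimodule k f
    | succ i ih =>
        intro hik
        have hi : i < k₀ := hik
        obtain ⟨B, NN, hne, hsub, hagree, hmem⟩ := ih (le_of_lt hik)
        obtain ⟨n', hmax, hatt⟩ : ∃ n' : ℕ, (∀ J ∈ B, J ⟨i, hi⟩ ≤ n') ∧
            ∃ J ∈ B, J ⟨i, hi⟩ = n' := by
          refine ⟨(B.image (fun J => J ⟨i, hi⟩)).max' (hne.image _), ?_, ?_⟩
          · intro J hJ
            apply Finset.le_max'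
            exact Finset.mem_image_of_mem _ hJ
          · have hmm := Finset.max'_mem (B.image (fun J => J ⟨i, hi⟩)) (hne.image _)
            rw [Finset.mem_image] at hmm
            obtain ⟨J, hJ, hJn⟩ := hmm
            exact ⟨J, hJ, hJn⟩
        refine ⟨B.filter (fun J => J ⟨i, hi⟩ = n'), Function.update NN i n', ?_, ?_, ?_, ?_⟩
        · obtain ⟨J, hJ, hJn⟩ := hatt
          exact ⟨J, Finset.mem_filter.mpr ⟨hJ, hJn⟩⟩
        · exact fun J hJ => hsub (Finset.mem_filter.mp hJ).1
        · intro J hJ t ht hti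
          rw [Finset.mem_filter] at hJ
          by_cases h : t = i
          · subst h
            rw [Function.update_self]
            exact hJ.2
          · rw [Function.update_of_ne h]
            exact hagree J hJ.1 t ht (by omega)
        · exact main_step k k₀ f i hi B (fun J => cf J) NN n' hmax hmem
  obtain ⟨B, NN, hne, hsub, hagree, hmem⟩ := loop k₀ (le_refl _)
  -- B is a singleton
  obtain ⟨J₀, hJ₀⟩ := hne
  have hBsingle : B = {J₀} := by
    apply Finset.eq_singleton_iff_unique_mem.mpr
    refine ⟨hJ₀, ?_⟩
    intro J hJ
    funext t
    rw [show t = (⟨(t : ℕ), t.isLt⟩ : Fin k₀) from (Fin.eta t t.isLt).symm]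
    rw [hagree J hJ (t : ℕ) t.isLt t.isLt, hagree J₀ hJ₀ (t : ℕ) t.isLt t.isLt]
  have hGmem : Gpart k k₀ NN k₀ ∈ novBimodule k f := by
    rw [hBsingle, Finset.sum_singleton, restPart_last] at hmem
    have hco : cf J₀ ≠ 0 := Finsupp.mem_support_iff.mp (hsub (hBsingle ▸ Finset.mem_singleton_self J₀))
    have h2 := Submodule.smul_mem (novBimodule k f) (cf J₀)⁻¹ hmem
    rwa [mul_smul_comm, mul_one, smul_smul, inv_mul_cancel₀ hco, one_smul] at h2
  -- append an extra pair X (k₀,0) * X (k₀+1,2)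
  have happend : Gpart k k₀ NN k₀ * (X (k₀, 0) * X (k₀ + 1, 2)) ∈ novBimodule k f := by
    have hu : (X (k₀, 0) * dNov k (X (k₀ + 1, 0)) : MvPolynomial (ℕ × ℕ) k) ∈ novikovSpan k :=
      mul_dNov_mem_novikovSpan k (X_mem_novikovSpan k k₀) (X_mem_novikovSpan k (k₀ + 1))
    have h1 : Gpart k k₀ NN k₀ * dNov k (X (k₀, 0) * dNov k (X (k₀ + 1, 0)))
        ∈ novBimodule k f := rmul_mem_novBimodule k f hGmem hu
    have h2 : (Gpart k k₀ NN k₀ * dNov k (X (k₀, 0))) * dNov k (X (k₀ + 1, 0))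
        ∈ novBimodule k f :=
      rmul_mem_novBimodule k f
        (rmul_mem_novBimodule k f hGmem (X_mem_novikovSpan k k₀))
        (X_mem_novikovSpan k (k₀ + 1))
    have heq : Gpart k k₀ NN k₀ * (X (k₀, 0) * X (k₀ + 1, 2))
        = Gpart k k₀ NN k₀ * dNov k (X (k₀, 0) * dNov k (X (k₀ + 1, 0)))
          - (Gpart k k₀ NN k₀ * dNov k (X (k₀, 0))) * dNov k (X (k₀ + 1, 0)) := by
      rw [dNov_X', Derivation.leibniz]
      simp only [dNov_X', smul_eq_mul]
      ring
    rw [heq]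
    exact Submodule.sub_mem _ h1 h2
  -- rename everything into the target monomial
  set Sig0 : ℕ := ∑ t ∈ Finset.range k₀, NN t with hSig0
  set p : ℕ := Sig0 + 1 with hp
  set q : ℕ := k₀ + 1 with hq
  set ren : ℕ → ℕ := fun v =>
    if v = k₀ then p + k₀
    else if v = k₀ + 1 then Sig0
    else if v < 2 * k₀ + 2 then p + (v - (k₀ + 2))
    else (∑ t' ∈ Finset.range ((v - (2 * k₀ + 2)).unpair.1), NN t')
          + (v - (2 * k₀ + 2)).unpair.2 with hren
  set Psi : MvPolynomial (ℕ × ℕ) k →ₐ[k] MvPolynomial (ℕ × ℕ) k :=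
    MvPolynomial.aeval (fun pr : ℕ × ℕ => (⇑(dNov k))^[pr.2] (X (ren pr.1, 0))) with hPsi
  have hPsiX : ∀ v j : ℕ, Psi (X (v, j)) = X (ren v, j) := by
    intro v j
    rw [hPsi]
    simp only [MvPolynomial.aeval_X]
    rw [dNov_iter_X, Nat.zero_add]
  have hPsimem : Psi (Gpart k k₀ NN k₀ * (X (k₀, 0) * X (k₀ + 1, 2))) ∈ novBimodule k f := by
    exact subst_mem_novBimodule k f happend (fun v => X (ren v, 0))
      (fun v => X_mem_novikovSpan k (ren v))
  have htarget : Psi (Gpart k k₀ NN k₀ * (X (k₀, 0) * X (k₀ + 1, 2)))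
      = (∏ i : Fin p, X ((i : ℕ), 2)) * (∏ i : Fin q, X ((p + (i : ℕ), 0) : ℕ × ℕ)) := by
    rw [map_mul, map_mul, hPsiX, hPsiX]
    have hrenk₀ : ren k₀ = p + k₀ := by simp [hren]
    have hrenk₁ : ren (k₀ + 1) = Sig0 := by
      simp [hren]
    have hPsiG : Psi (Gpart k k₀ NN k₀)
        = ∏ t ∈ Finset.range k₀,
            (X (p + t, 0) * ∏ r ∈ Finset.range (NN t),
              X ((∑ t' ∈ Finset.range t, NN t') + r, 2)) := by
      unfold Gpart
      rw [map_prod]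
      refine Finset.prod_congr rfl ?_
      intro t ht
      simp only [Finset.mem_range] at ht
      rw [map_mul, map_prod, hPsiX]
      have hrenb : ren (bbv k₀ t) = p + t := by
        simp only [hren]
        unfold bbv
        rw [if_neg (by omega), if_neg (by omega), if_pos (by omega)]
        congr 1
        omega
      rw [hrenb]
      congr 1
      refine Finset.prod_congr rfl ?_
      intro r _
      rw [hPsiX]
      have hrenc : ren (ccv k₀ t r) = (∑ t' ∈ Finset.range t, NN t') + r := by
        simp only [hren]
        unfold ccv
        rw [if_neg (by omega), if_neg (by omega), if_neg (by omega)]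
        have : 2 * k₀ + 2 + Nat.pair t r - (2 * k₀ + 2) = Nat.pair t r := by omega
        rw [this, Nat.unpair_pair]
      rw [hrenc]
    rw [hPsiG, hrenk₀, hrenk₁, Finset.prod_mul_distrib, off_prod_lemma]
    rw [Fin.prod_univ_eq_prod_range (fun j => (X (j, 2) : MvPolynomial (ℕ × ℕ) k)) p]
    rw [Fin.prod_univ_eq_prod_range (fun j => (X (p + j, 0) : MvPolynomial (ℕ × ℕ) k)) q]
    rw [hq, Finset.prod_range_succ (fun t => (X (p + t, 0) : MvPolynomial (ℕ × ℕ) k)) k₀]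
    rw [hp]
    rw [Finset.prod_range_succ (fun j => (X (j, 2) : MvPolynomial (ℕ × ℕ) k)) Sig0]
    ring
  refine ⟨p, q, by omega, by omega, ?_⟩
  rw [htarget] at hPsimem
  exact hPsimem
end
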